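/- Let \(\mathcal{H}\) be an abelian length category with a torsion pair \((\mathcal{X},\mathcal{Y})\) and let \(\widecheck{\mathcal{X}} = \{X \in \mathcal{H} \mid \text{every } f : X \to Y \text{ with } Y\in\mathcal{Y} \text{ has } \mathrm{coker}(f)\in\mathcal{Y}\}\). Then \(\widecheck{\mathcal{X}} \cap \mathcal{Y}\) is a wide subcategory of \(\mathcal{H}\), i.e. it is closed under kernels, cokernels, and extensions. -/

import Mathlib

open CategoryTheory Limits

universe v u

namespace Mut

variable {C : Type u} [Category.{v} C]

/-- A class of objects closed under isomorphisms. -/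
def IsoClosed (S : Set C) : Prop := ∀ ⦃X Y : C⦄, (X ≅ Y) → X ∈ S → Y ∈ S

/-- `g : E ⟶ X` is an `M`-precover of `X`. -/
def IsPrecover (M : Set C) {E X : C} (g : E ⟶ X) : Prop :=
  E ∈ M ∧ ∀ ⦃E' : C⦄ (f : E' ⟶ X), E' ∈ M → ∃ h : E' ⟶ E, h ≫ g = f

/-- `g : E ⟶ X` is an `M`-cover of `X`. -/
def IsCover (M : Set C) {E X : C} (g : E ⟶ X) : Prop :=
  IsPrecover M g ∧ ∀ h : E ⟶ E, h ≫ g = g → IsIso h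

/-- `g : X ⟶ E` is an `M`-preenvelope of `X`. -/
def IsPreenvelope (M : Set C) {X E : C} (g : X ⟶ E) : Prop :=
  E ∈ M ∧ ∀ ⦃E' : C⦄ (f : X ⟶ E'), E' ∈ M → ∃ h : E ⟶ E', g ≫ h = f

/-- `g : X ⟶ E` is an `M`-envelope of `X`. -/
def IsEnvelope (M : Set C) {X E : C} (g : X ⟶ E) : Prop :=
  IsPreenvelope M g ∧ ∀ h : E ⟶ E, g ≫ h = g → IsIso h

section Abelian

variable [Abelian C]

/-- `0 ⟶ A ⟶ X ⟶ B ⟶ 0` is a short exact sequence. -/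
def SES {A X B : C} (i : A ⟶ X) (p : X ⟶ B) : Prop :=
  ∃ w : i ≫ p = 0, (ShortComplex.mk i p w).ShortExact

/-- A class of objects closed under extensions. -/
def ClosedUnderExtensions (S : Set C) : Prop :=
  ∀ ⦃A X B : C⦄ (i : A ⟶ X) (p : X ⟶ B), SES i p → A ∈ S → B ∈ S → X ∈ S

/-- A torsion pair `(T, F)` in an abelian category: strict (iso-closed) full
subcategories with no nonzero maps from `T` to `F`, such that every object is an
extension of an object of `F` by an object of `T`. -/
structure IsTorsionPair (T F : Set C) : Prop where
  isoClosed_torsion : IsoClosed T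
  isoClosed_free : IsoClosed F
  hom_zero : ∀ ⦃X Y : C⦄, X ∈ T → Y ∈ F → ∀ f : X ⟶ Y, f = 0
  exists_ses : ∀ X : C, ∃ (A B : C) (i : A ⟶ X) (p : X ⟶ B),
    A ∈ T ∧ B ∈ F ∧ SES i p

/-- `M ⋆ N`: objects that are extensions of an object of `N` by an object of `M`. -/
def star (M N : Set C) : Set C :=
  {X | ∃ (A B : C) (i : A ⟶ X) (p : X ⟶ B), A ∈ M ∧ B ∈ N ∧ SES i p}

/-- `X` has a filtration `0 = X₀ ⊆ X₁ ⊆ X₂ ⊆ X₃ = X` with `X₁ ∈ U`,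
`X₂/X₁ ∈ S` and `X/X₂ ∈ F`. -/
def HasFiltration (U S F : Set C) (X : C) : Prop :=
  ∃ (X₁ X₂ : C) (a : X₁ ⟶ X₂) (b : X₂ ⟶ X), Mono a ∧ Mono b ∧
    X₁ ∈ U ∧ cokernel a ∈ S ∧ cokernel b ∈ F

/-- A filtration triple `(U, S, F)` in an abelian category. -/
structure IsFiltrationTriple (U S F : Set C) : Prop where
  isoClosed_U : IsoClosed U
  isoClosed_S : IsoClosed S
  isoClosed_F : IsoClosed F
  hom_US : ∀ ⦃X Y : C⦄, X ∈ U → Y ∈ S → ∀ f : X ⟶ Y, f = 0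
  hom_UF : ∀ ⦃X Y : C⦄, X ∈ U → Y ∈ F → ∀ f : X ⟶ Y, f = 0
  hom_SF : ∀ ⦃X Y : C⦄, X ∈ S → Y ∈ F → ∀ f : X ⟶ Y, f = 0
  filt : ∀ X : C, HasFiltration U S F X

/-- A wide subcategory: an iso-closed class closed under kernels, cokernels
and extensions. -/
def IsWide (S : Set C) : Prop :=
  IsoClosed S ∧ ClosedUnderExtensions S ∧
    (∀ ⦃X Y : C⦄ (f : X ⟶ Y), X ∈ S → Y ∈ S → kernel f ∈ S) ∧
    (∀ ⦃X Y : C⦄ (f : X ⟶ Y), X ∈ S → Y ∈ S → cokernel f ∈ S)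

end Abelian

/-- The class `∨X` of objects all of whose cokernels of maps to `𝒴` stay in `𝒴`. -/
def torsCheck [Abelian C] (𝒴 : Set C) : Set C :=
  {A | ∀ ⦃B : C⦄ (f : A ⟶ B), B ∈ 𝒴 → cokernel f ∈ 𝒴}


section Aux

variable [Abelian C] {𝒳 𝒴 : Set C}

/-- The torsion-free class is closed under subobjects. -/
lemma mem_free_of_mono (h : IsTorsionPair 𝒳 𝒴) {K X : C} (m : K ⟶ X) [Mono m]
    (hX : X ∈ 𝒴) : K ∈ 𝒴 := by
  obtain ⟨T, F, i, p, hT, hF, w, hse⟩ := h.exists_ses K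
  have hi0 : i = 0 := by
    have h1 : i ≫ m = 0 := h.hom_zero hT hX (i ≫ m)
    rw [← cancel_mono m, h1, zero_comp]
  haveI := hse.epi_g
  haveI : Mono p := hse.exact.mono_g hi0
  haveI : IsIso p := isIso_of_mono_of_epi p
  exact h.isoClosed_free (asIso p).symm hF

/-- The torsion-free class is closed under extensions. -/
lemma mem_free_of_ext (h : IsTorsionPair 𝒳 𝒴) {A X B : C} (i : A ⟶ X) (p : X ⟶ B)
    (hses : SES i p) (hA : A ∈ 𝒴) (hB : B ∈ 𝒴) : X ∈ 𝒴 := by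
  obtain ⟨w, hse⟩ := hses
  obtain ⟨T, F, t, q, hT, hF, w', hse'⟩ := h.exists_ses X
  have h1 : t ≫ p = 0 := h.hom_zero hT hB (t ≫ p)
  haveI := hse.mono_f
  obtain ⟨l, hl⟩ := hse.exact.lift' t h1
  have hl0 : l = 0 := h.hom_zero hT hA l
  have ht0 : t = 0 := by rw [← hl, hl0, zero_comp]
  haveI := hse'.epi_g
  haveI : Mono q := hse'.exact.mono_g ht0
  haveI : IsIso q := isIso_of_mono_of_epi q
  exact h.isoClosed_free (asIso q).symm hF

/-- If `g : B ⟶ cokernel (i ≫ f)` is induced by `f` through the epi `p`, then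
`cokernel f ≅ cokernel g`. -/
noncomputable def cokerIso1 {A X B Y : C} (i : A ⟶ X) (p : X ⟶ B) [Epi p] (f : X ⟶ Y)
    (g : B ⟶ cokernel (i ≫ f)) (hg : p ≫ g = f ≫ cokernel.π (i ≫ f)) :
    cokernel f ≅ cokernel g := by
  have c1 : (i ≫ f) ≫ cokernel.π f = 0 := by
    rw [Category.assoc, cokernel.condition, comp_zero]
  have c2 : g ≫ cokernel.desc (i ≫ f) (cokernel.π f) c1 = 0 := by
    rw [← cancel_epi p, ← Category.assoc, hg, Category.assoc, cokernel.π_desc,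
      cokernel.condition, comp_zero]
  have c3 : f ≫ cokernel.π (i ≫ f) ≫ cokernel.π g = 0 := by
    rw [← Category.assoc, ← hg, Category.assoc, cokernel.condition, comp_zero]
  refine ⟨cokernel.desc f (cokernel.π (i ≫ f) ≫ cokernel.π g) c3,
    cokernel.desc g (cokernel.desc (i ≫ f) (cokernel.π f) c1) c2, ?_, ?_⟩
  · rw [← cancel_epi (cokernel.π f)]; simp
  · have key : cokernel.desc (i ≫ f) (cokernel.π f) c1 ≫
        cokernel.desc f (cokernel.π (i ≫ f) ≫ cokernel.π g) c3 = cokernel.π g := by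
      rw [← cancel_epi (cokernel.π (i ≫ f))]; simp
    rw [← cancel_epi (cokernel.π g)]; simp [key]

/-- The cokernel of `pushout.inr` is the cokernel of the opposite leg. -/
noncomputable def cokerIsoInr {K X B : C} (k : K ⟶ X) (g : K ⟶ B) :
    cokernel (pushout.inr k g) ≅ cokernel k where
  hom := cokernel.desc _ (pushout.desc (cokernel.π k) 0 (by simp)) (by erw [pushout.inr_desc])
  inv := cokernel.desc k (pushout.inl k g ≫ cokernel.π _)
    (by rw [← Category.assoc, pushout.condition, Category.assoc, cokernel.condition, comp_zero])
  hom_inv_id := by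
    rw [← cancel_epi (cokernel.π (pushout.inr k g))]
    simp only [cokernel.π_desc_assoc, Category.comp_id]
    apply pushout.hom_ext <;> simp [pushout.inl_desc_assoc, pushout.inr_desc_assoc]
  inv_hom_id := by
    rw [← cancel_epi (cokernel.π k)]
    simp [pushout.inl_desc]

/-- The cokernel of `pushout.inl` is the cokernel of the opposite leg. -/
noncomputable def cokerIsoInl {K X B : C} (k : K ⟶ X) (g : K ⟶ B) :
    cokernel (pushout.inl k g) ≅ cokernel g where
  hom := cokernel.desc _ (pushout.desc 0 (cokernel.π g) (by simp)) (by erw [pushout.inl_desc])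
  inv := cokernel.desc g (pushout.inr k g ≫ cokernel.π _)
    (by rw [← Category.assoc, ← pushout.condition, Category.assoc, cokernel.condition, comp_zero])
  hom_inv_id := by
    rw [← cancel_epi (cokernel.π (pushout.inl k g))]
    simp only [cokernel.π_desc_assoc, Category.comp_id]
    apply pushout.hom_ext <;> simp [pushout.inl_desc_assoc, pushout.inr_desc_assoc]
  inv_hom_id := by
    rw [← cancel_epi (cokernel.π g)]
    simp [pushout.inr_desc]

end Aux

/-- In an abelian length category, for a torsion pair `(𝒳, 𝒴)`, the class
`∨𝒳 ∩ 𝒴` is a wide subcategory. -/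
theorem statement_7 [Abelian C]
    (hlen : ∀ X : C, IsNoetherianObject X ∧ IsArtinianObject X)
    {𝒳 𝒴 : Set C} (h : IsTorsionPair 𝒳 𝒴) :
    IsWide (torsCheck 𝒴 ∩ 𝒴) := by
  refine ⟨?_, ?_, ?_, ?_⟩
  · -- iso-closed
    rintro X X' e ⟨hX1, hX2⟩
    refine ⟨fun B f hB => ?_, h.isoClosed_free e hX2⟩
    exact h.isoClosed_free (cokernelEpiComp e.hom f) (hX1 (e.hom ≫ f) hB)
  · -- extensions
    rintro A X B i p hses ⟨hA1, hA2⟩ ⟨hB1, hB2⟩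
    refine ⟨fun Y f hY => ?_, mem_free_of_ext h i p hses hA2 hB2⟩
    obtain ⟨w, hse⟩ := hses
    haveI := hse.epi_g
    have hY1 : cokernel (i ≫ f) ∈ 𝒴 := hA1 (i ≫ f) hY
    obtain ⟨g, hg⟩ := hse.exact.desc' (f ≫ cokernel.π (i ≫ f))
      (by rw [← Category.assoc, cokernel.condition])
    exact h.isoClosed_free (cokerIso1 i p f g hg).symm (hB1 g hY1)
  · -- kernels
    rintro X Y f ⟨hX1, hX2⟩ ⟨hY1, hY2⟩
    refine ⟨fun B g hB => ?_, mem_free_of_mono h (kernel.ι f) hX2⟩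
    set k : kernel f ⟶ X := kernel.ι f with hk
    have hcokk : cokernel k ∈ 𝒴 := mem_free_of_mono h (Abelian.factorThruCoimage f) hY2
    have hsesP : SES (pushout.inr k g) (cokernel.π (pushout.inr k g)) := by
      refine ⟨cokernel.condition _, ShortComplex.ShortExact.mk' ?_ ?_ ?_⟩
      · exact ShortComplex.exact_of_g_is_cokernel _ (cokernelIsCokernel _)
      · exact Abelian.mono_pushout_of_mono_f k g
      · exact coequalizer.π_epi
    have hP : pushout k g ∈ 𝒴 := mem_free_of_ext h _ _ hsesP hB
      (h.isoClosed_free (cokerIsoInr k g).symm hcokk)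
    exact h.isoClosed_free (cokerIsoInl k g) (hX1 (pushout.inl k g) hP)
  · -- cokernels
    rintro X Y f ⟨hX1, hX2⟩ ⟨hY1, hY2⟩
    refine ⟨fun B g hB => ?_, hX1 f hY2⟩
    exact h.isoClosed_free (cokernelEpiComp (cokernel.π f) g) (hY1 (cokernel.π f ≫ g) hB)

end Mut
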